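/- Every optimal solution of the fractional assignment LP (maximizing the number of students at regular schools subject to distributional constraints) can be written as a convex combination of approximately feasible integral assignments, where an integral assignment is approximately feasible if it violates each lower- and upper-bound quota by at most |T| and assigns at least ⌊OPT⌋ students to regular schools. -/

import Mathlib

open Finset

set_option linter.unusedSectionVars false
namespace Stmt3Aux

/-- `G r y` = length of `[0,y) ∩ [r, r+1)`. -/
noncomputable def G (r : ℕ) (y : ℝ) : ℝ := min y ((r : ℝ) + 1) - min y (r : ℝ)

lemma G_mono {r : ℕ} {a b : ℝ} (h : a ≤ b) : G r a ≤ G r b := by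
  unfold G
  rcases le_total a (r : ℝ) with h1 | h1 <;> rcases le_total b ((r : ℝ) + 1) with h2 | h2 <;>
    simp [min_def] <;> split_ifs <;> linarith

lemma G_nonneg {r : ℕ} {y : ℝ} : 0 ≤ G r y := by
  unfold G
  have : min y (r : ℝ) ≤ min y ((r : ℝ) + 1) := by
    apply min_le_min le_rfl; linarith
  linarith

lemma G_le_one {r : ℕ} {y : ℝ} : G r y ≤ 1 := by
  unfold G
  rcases le_total y (r : ℝ) with h | h
  · rw [min_eq_left h, min_eq_left (by linarith)]; linarith
  · rw [min_eq_right h]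
    have : min y ((r : ℝ) + 1) ≤ (r : ℝ) + 1 := min_le_right _ _
    linarith

lemma G_eq_one {r : ℕ} {y : ℝ} (h : (r : ℝ) + 1 ≤ y) : G r y = 1 := by
  unfold G
  rw [min_eq_right h, min_eq_right (by linarith)]; ring

lemma G_zero {r : ℕ} : G r 0 = 0 := by
  unfold G
  rw [min_eq_left (by positivity), min_eq_left (by positivity)]
  ring

lemma lt_of_G_lt_one {r : ℕ} {y : ℝ} (h : G r y < 1) : y < (r : ℝ) + 1 := by
  by_contra hc
  push_neg at hc
  rw [G_eq_one hc] at h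
  exact lt_irrefl _ h

lemma sum_G_range (m : ℕ) {y : ℝ} (hy : 0 ≤ y) :
    ∑ r ∈ Finset.range m, G r y = min y (m : ℝ) := by
  have := Finset.sum_range_sub (fun k : ℕ => min y (k : ℝ)) m
  have h0 : min y ((0:ℕ) : ℝ) = 0 := by
    simp [min_eq_right hy]
  calc ∑ r ∈ Finset.range m, G r y
      = ∑ r ∈ Finset.range m, (min y ((r+1 : ℕ) : ℝ) - min y (r : ℝ)) := by
        apply Finset.sum_congr rfl; intro r _; unfold G; push_cast; ring_nf
    _ = min y ((m : ℕ) : ℝ) - min y ((0:ℕ) : ℝ) := this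
    _ = min y (m : ℝ) := by rw [h0]; ring

lemma sum_G_fin (m : ℕ) {y : ℝ} (hy : 0 ≤ y) :
    ∑ r : Fin m, G r.val y = min y (m : ℝ) := by
  rw [Fin.sum_univ_eq_sum_range (fun r => G r y) m]
  exact sum_G_range m hy

/-- cumulative sums with respect to an enumeration -/
noncomputable def cum {α : Type*} [Fintype α] {n : ℕ} (e : α ≃ Fin n) (m : α → ℝ) (k : ℕ) : ℝ :=
  ∑ j ∈ univ.filter (fun j => (e j).val < k), m j

lemma cum_zero {α : Type*} [Fintype α] {n : ℕ} (e : α ≃ Fin n) (m : α → ℝ) : cum e m 0 = 0 := by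
  unfold cum
  rw [Finset.filter_false_of_mem] <;> simp

lemma cum_top {α : Type*} [Fintype α] {n : ℕ} (e : α ≃ Fin n) (m : α → ℝ) {k : ℕ} (hk : n ≤ k) :
    cum e m k = ∑ j, m j := by
  unfold cum
  rw [Finset.filter_true_of_mem]
  intro j _
  exact lt_of_lt_of_le (e j).isLt hk

lemma cum_nonneg {α : Type*} [Fintype α] {n : ℕ} (e : α ≃ Fin n) {m : α → ℝ}
    (hm : ∀ j, 0 ≤ m j) (k : ℕ) : 0 ≤ cum e m k :=
  Finset.sum_nonneg fun j _ => hm j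

lemma cum_le_total {α : Type*} [Fintype α] {n : ℕ} (e : α ≃ Fin n) {m : α → ℝ}
    (hm : ∀ j, 0 ≤ m j) (k : ℕ) : cum e m k ≤ ∑ j, m j := by
  apply Finset.sum_le_sum_of_subset_of_nonneg (Finset.filter_subset _ _)
  intro j _ _; exact hm j

lemma cum_apply_succ {α : Type*} [Fintype α] {n : ℕ} (e : α ≃ Fin n) (m : α → ℝ)
    (i : α) : cum e m ((e i).val + 1) = cum e m (e i).val + m i := by
  classical
  unfold cum
  have hfil : univ.filter (fun j => (e j).val < (e i).val + 1)
      = insert i (univ.filter (fun j => (e j).val < (e i).val)) := by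
    ext j
    simp only [Finset.mem_filter, Finset.mem_univ, true_and, Finset.mem_insert,
      Nat.lt_succ_iff_lt_or_eq]
    constructor
    · rintro (h | h)
      · exact Or.inr h
      · exact Or.inl (e.injective (Fin.val_injective h))
    · rintro (rfl | h)
      · exact Or.inr rfl
      · exact Or.inl h
  rw [hfil, Finset.sum_insert (by simp)]
  ring

lemma sum_sub_comp {α : Type*} [Fintype α] {n : ℕ} (e : α ≃ Fin n) (F : ℕ → ℝ) :
    ∑ i : α, (F ((e i).val + 1) - F ((e i).val)) = F n - F 0 := by
  rw [← e.symm.sum_comp (fun i : α => F ((e i).val + 1) - F ((e i).val))]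
  simp only [Equiv.apply_symm_apply]
  rw [Fin.sum_univ_eq_sum_range (fun k => F (k + 1) - F k) n]
  exact Finset.sum_range_sub F n

lemma sum_cum_sub {α : Type*} [Fintype α] {n : ℕ} (e : α ≃ Fin n) (m : α → ℝ)
    (F : ℝ → ℝ) :
    ∑ i : α, (F (cum e m ((e i).val) + m i) - F (cum e m ((e i).val)))
      = F (∑ j, m j) - F 0 := by
  have h1 : ∀ i : α, cum e m ((e i).val) + m i = cum e m ((e i).val + 1) := fun i =>
    (cum_apply_succ e m i).symm
  calc ∑ i : α, (F (cum e m ((e i).val) + m i) - F (cum e m ((e i).val)))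
      = ∑ i : α, ((F ∘ cum e m) ((e i).val + 1) - (F ∘ cum e m) ((e i).val)) := by
        apply Finset.sum_congr rfl; intro i _; rw [h1 i]; rfl
    _ = (F ∘ cum e m) n - (F ∘ cum e m) 0 := sum_sub_comp e (F ∘ cum e m)
    _ = F (∑ j, m j) - F 0 := by rw [Function.comp, Function.comp, cum_top e m le_rfl, cum_zero]

lemma card_filter_sumtype {A B : Type*} [Fintype A] [Fintype B] (P : A ⊕ B → Prop)
    [DecidablePred P] :
    (univ.filter P).card
      = (univ.filter (fun a => P (Sum.inl a))).card + (univ.filter (fun b => P (Sum.inr b))).card := by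
  simp only [Finset.card_filter]
  rw [Fintype.sum_sum_type]

lemma card_filter_equiv_mem {A B : Type*} [Fintype A] [DecidableEq B] (g : A ≃ B)
    (S : Finset B) : (univ.filter (fun u => g u ∈ S)).card = S.card := by
  apply Finset.card_bij (fun u _ => g u)
  · intro u hu; simpa using (Finset.mem_filter.mp hu).2
  · intro u _ v _ h; exact g.injective h
  · intro b hb
    exact ⟨g.symm b, by simpa using hb, by simp⟩



section Main

variable {N M T : Type} [Fintype N] [Fintype M] [Fintype T] [DecidableEq M] [DecidableEq T]

noncomputable def cts (tpy : N → T) (x : N → M → ℝ) (t : T) (s : M) : ℝ :=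
  ∑ i ∈ univ.filter (fun i => tpy i = t), x i s

noncomputable def slots (tpy : N → T) (x : N → M → ℝ) (t : T) (s : M) : ℕ :=
  (⌈cts tpy x t s⌉).toNat

abbrev Idx (tpy : N → T) (x : N → M → ℝ) : Type :=
  (p : T × M) × Fin (slots tpy x p.1 p.2)

noncomputable def eN (N : Type) [Fintype N] : N ≃ Fin (Fintype.card N) := Fintype.equivFin N

noncomputable def massf (tpy : N → T) (x : N → M → ℝ) (t : T) (s : M) : N → ℝ :=
  fun j => if tpy j = t then x j s else 0

variable {tpy : N → T} {x : N → M → ℝ}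

lemma cts_nonneg (hnn : ∀ i s, 0 ≤ x i s) (t : T) (s : M) : 0 ≤ cts tpy x t s :=
  Finset.sum_nonneg fun i _ => hnn i s

lemma slots_cast (hnn : ∀ i s, 0 ≤ x i s) (t : T) (s : M) :
    ((slots tpy x t s : ℕ) : ℝ) = (⌈cts tpy x t s⌉ : ℝ) := by
  unfold slots
  have h := Int.toNat_of_nonneg (Int.ceil_nonneg (cts_nonneg (tpy := tpy) hnn t s))
  exact_mod_cast h

lemma cts_le_slots (hnn : ∀ i s, 0 ≤ x i s) (t : T) (s : M) :
    cts tpy x t s ≤ (slots tpy x t s : ℝ) := by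
  rw [slots_cast hnn]; exact Int.le_ceil _

lemma slots_lt_cts_add_one (hnn : ∀ i s, 0 ≤ x i s) (t : T) (s : M) :
    ((slots tpy x t s : ℕ) : ℝ) < cts tpy x t s + 1 := by
  rw [slots_cast hnn]; exact Int.ceil_lt_add_one _

lemma massf_nonneg (hnn : ∀ i s, 0 ≤ x i s) (t : T) (s : M) (j : N) :
    0 ≤ massf tpy x t s j := by
  unfold massf; split_ifs; exacts [hnn j s, le_rfl]

lemma sum_massf (t : T) (s : M) : ∑ j, massf tpy x t s j = cts tpy x t s := by
  unfold massf cts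
  rw [Finset.sum_filter]

lemma sum_massf_pairs (hrow : ∀ i, ∑ s, x i s = 1) (i : N) :
    ∑ p : T × M, massf tpy x p.1 p.2 i = 1 := by
  rw [Fintype.sum_prod_type]
  unfold massf
  have h1 : ∀ t : T, ∑ s : M, (if tpy i = t then x i s else 0)
      = if tpy i = t then (1:ℝ) else 0 := by
    intro t
    by_cases h : tpy i = t <;> simp [h, hrow i]
  rw [Finset.sum_congr rfl fun t _ => h1 t]
  simp

lemma sum_cts_filter (R : Finset T) (s : M) :
    ∑ t ∈ R, cts tpy x t s = ∑ i ∈ univ.filter (fun i => tpy i ∈ R), x i s := by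
  unfold cts
  simp only [Finset.sum_filter]
  rw [Finset.sum_comm]
  apply Finset.sum_congr rfl
  intro i _
  rw [Finset.sum_ite_eq R (tpy i) (fun _ => x i s)]

lemma sum_cts_all (hrow : ∀ i, ∑ s, x i s = 1) :
    ∑ p : T × M, cts tpy x p.1 p.2 = (Fintype.card N : ℝ) := by
  rw [Fintype.sum_prod_type]
  rw [Finset.sum_comm]
  have h1 : ∀ s : M, ∑ t : T, cts tpy x t s = ∑ i, x i s := by
    intro s
    have := sum_cts_filter (tpy := tpy) (x := x) (univ : Finset T) s
    simpa using this
  rw [Finset.sum_congr rfl fun s _ => h1 s, Finset.sum_comm]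
  simp [hrow]

lemma card_Idx : Fintype.card (Idx tpy x) = ∑ p : T × M, slots tpy x p.1 p.2 := by
  simp [Idx]



/-- sum of `G`-differences over a `Fin K` of slot indices -/
lemma sum_G_sub_fin (K : ℕ) {a b : ℝ} (ha : 0 ≤ a) (hab : a ≤ b) (hb : b ≤ (K : ℝ)) :
    ∑ j : Fin K, (G j.val b - G j.val a) = b - a := by
  rw [Finset.sum_sub_distrib, sum_G_fin K (le_trans ha hab), sum_G_fin K ha,
    min_eq_left hb, min_eq_left (le_trans hab hb)]

noncomputable def Acum (tpy : N → T) (x : N → M → ℝ) (t : T) (s : M) (i : N) : ℝ :=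
  cum (eN N) (massf tpy x t s) ((eN N i).val)

noncomputable def Dreal (tpy : N → T) (x : N → M → ℝ) (i : N) (q : Idx tpy x) : ℝ :=
  G q.2.val (Acum tpy x q.1.1 q.1.2 i + massf tpy x q.1.1 q.1.2 i)
    - G q.2.val (Acum tpy x q.1.1 q.1.2 i)

lemma Acum_nonneg (hnn : ∀ i s, 0 ≤ x i s) (t : T) (s : M) (i : N) :
    0 ≤ Acum tpy x t s i :=
  cum_nonneg _ (massf_nonneg hnn t s) _

lemma Acum_add_le (hnn : ∀ i s, 0 ≤ x i s) (t : T) (s : M) (i : N) :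
    Acum tpy x t s i + massf tpy x t s i ≤ cts tpy x t s := by
  rw [Acum, ← cum_apply_succ (eN N) (massf tpy x t s) i, ← sum_massf (tpy := tpy) t s]
  exact cum_le_total _ (massf_nonneg hnn t s) _

lemma Dreal_nonneg (hnn : ∀ i s, 0 ≤ x i s) (i : N) (q : Idx tpy x) :
    0 ≤ Dreal tpy x i q := by
  unfold Dreal
  have := G_mono (r := q.2.val) (a := Acum tpy x q.1.1 q.1.2 i)
    (b := Acum tpy x q.1.1 q.1.2 i + massf tpy x q.1.1 q.1.2 i)
    (le_add_of_nonneg_right (massf_nonneg (tpy := tpy) hnn q.1.1 q.1.2 i))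
  linarith

lemma Dreal_zero_of_ne (i : N) (q : Idx tpy x) (h : q.1.1 ≠ tpy i) :
    Dreal tpy x i q = 0 := by
  unfold Dreal massf
  rw [if_neg (fun hh => h hh.symm)]
  ring

lemma Dreal_col (hnn : ∀ i s, 0 ≤ x i s) (q : Idx tpy x) :
    ∑ i, Dreal tpy x i q = G q.2.val (cts tpy x q.1.1 q.1.2) := by
  unfold Dreal Acum
  rw [sum_cum_sub (eN N) (massf tpy x q.1.1 q.1.2) (G q.2.val),
    sum_massf (tpy := tpy) q.1.1 q.1.2, G_zero]
  ring

lemma sum_Dreal_block (hnn : ∀ i s, 0 ≤ x i s) (p : T × M) (i : N) :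
    ∑ r : Fin (slots tpy x p.1 p.2), Dreal tpy x i ⟨p, r⟩ = massf tpy x p.1 p.2 i := by
  have ha := Acum_nonneg (tpy := tpy) hnn p.1 p.2 i
  have hm := massf_nonneg (tpy := tpy) hnn p.1 p.2 i
  have hb := Acum_add_le (tpy := tpy) hnn p.1 p.2 i
  have hb' := le_trans hb (cts_le_slots (tpy := tpy) hnn p.1 p.2)
  have := sum_G_sub_fin (slots tpy x p.1 p.2) ha (le_add_of_nonneg_right hm) hb'
  unfold Dreal
  simpa using this

lemma Dreal_row (hnn : ∀ i s, 0 ≤ x i s) (hrow : ∀ i, ∑ s, x i s = 1) (i : N) :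
    ∑ q : Idx tpy x, Dreal tpy x i q = 1 := by
  rw [← Finset.univ_sigma_univ, Finset.sum_sigma]
  rw [Finset.sum_congr rfl fun p _ => sum_Dreal_block hnn p i]
  exact sum_massf_pairs hrow i

noncomputable def dcol (tpy : N → T) (x : N → M → ℝ) (q : Idx tpy x) : ℝ :=
  1 - G q.2.val (cts tpy x q.1.1 q.1.2)

lemma dcol_nonneg (q : Idx tpy x) : 0 ≤ dcol tpy x q := by
  unfold dcol; linarith [G_le_one (r := q.2.val) (y := cts tpy x q.1.1 q.1.2)]

lemma dcol_pos_unique (hnn : ∀ i s, 0 ≤ x i s) {q q' : Idx tpy x}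
    (h : 0 < dcol tpy x q) (h' : 0 < dcol tpy x q') (hp : q.1 = q'.1) : q = q' := by
  obtain ⟨p, r⟩ := q
  obtain ⟨p', r'⟩ := q'
  cases hp
  have key : ∀ (rr rr' : Fin (slots tpy x p.1 p.2)),
      0 < dcol tpy x ⟨p, rr⟩ → rr'.val ≤ rr.val := by
    intro rr rr' hd
    have h1 : cts tpy x p.1 p.2 < (rr.val : ℝ) + 1 := by
      have := lt_of_G_lt_one (r := rr.val) (y := cts tpy x p.1 p.2) (by unfold dcol at hd; linarith)
      exact this
    have h2 : (⌈cts tpy x p.1 p.2⌉ : ℤ) ≤ (rr.val : ℤ) + 1 := by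
      apply Int.ceil_le.mpr
      push_cast
      linarith
    have h3 : slots tpy x p.1 p.2 ≤ rr.val + 1 := by
      unfold slots
      omega
    have h4 := rr'.isLt
    omega
  have hrr : r = r' := Fin.ext (le_antisymm (key r' r h') (key r r' h))
  rw [hrr]

/-- reduce a sum over a block-filter on `Idx` to an iterated sum -/
lemma sum_sigma_blk {β : Type*} [AddCommMonoid β] (f : Idx tpy x → β) (R : Finset T) (s : M) :
    ∑ q ∈ univ.filter (fun q : Idx tpy x => q.1.1 ∈ R ∧ q.1.2 = s), f q
      = ∑ t ∈ R, ∑ r : Fin (slots tpy x t s), f ⟨(t, s), r⟩ := by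
  have hset : univ.filter (fun q : Idx tpy x => q.1.1 ∈ R ∧ q.1.2 = s)
      = (univ.filter (fun p : T × M => p.1 ∈ R ∧ p.2 = s)).sigma (fun _ => univ) := by
    ext q
    simp [Finset.mem_sigma]
  rw [hset, Finset.sum_sigma, Finset.sum_filter]
  rw [Fintype.sum_prod_type]
  have hinner : ∀ t : T,
      (∑ s' : M, if t ∈ R ∧ s' = s then (∑ r : Fin (slots tpy x t s'), f ⟨(t, s'), r⟩) else 0)
      = if t ∈ R then (∑ r : Fin (slots tpy x t s), f ⟨(t, s), r⟩) else 0 := by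
    intro t
    by_cases h : t ∈ R
    · simp only [h, true_and]
      rw [Finset.sum_ite_eq' univ s (fun s' => ∑ r : Fin (slots tpy x t s'), f ⟨(t, s'), r⟩)]
      simp
    · simp [h]
  rw [Finset.sum_congr rfl fun t _ => hinner t, ← Finset.sum_filter]
  apply Finset.sum_congr
  · ext t; simp
  · intro t _; rfl

lemma sum_sigma_phi {β : Type*} [AddCommMonoid β] (f : Idx tpy x → β) (phi : M) :
    ∑ q ∈ univ.filter (fun q : Idx tpy x => q.1.2 = phi), f q
      = ∑ t : T, ∑ r : Fin (slots tpy x t phi), f ⟨(t, phi), r⟩ := by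
  have : univ.filter (fun q : Idx tpy x => q.1.2 = phi)
      = univ.filter (fun q : Idx tpy x => q.1.1 ∈ (univ : Finset T) ∧ q.1.2 = phi) := by
    apply Finset.filter_congr; intro q _; simp
  rw [this, sum_sigma_blk]

lemma sum_G_block (hnn : ∀ i s, 0 ≤ x i s) (t : T) (s : M) :
    ∑ r : Fin (slots tpy x t s), G r.val (cts tpy x t s) = cts tpy x t s := by
  rw [sum_G_fin _ (cts_nonneg (tpy := tpy) hnn t s),
    min_eq_left (cts_le_slots (tpy := tpy) hnn t s)]

lemma sum_dcol_block (hnn : ∀ i s, 0 ≤ x i s) (t : T) (s : M) :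
    ∑ r : Fin (slots tpy x t s), dcol tpy x ⟨(t, s), r⟩
      = (slots tpy x t s : ℝ) - cts tpy x t s := by
  unfold dcol
  rw [Finset.sum_sub_distrib, sum_G_block hnn t s]
  simp

noncomputable def Dphi (tpy : N → T) (x : N → M → ℝ) (phi : M) : ℝ :=
  ∑ q ∈ univ.filter (fun q : Idx tpy x => q.1.2 = phi), dcol tpy x q

lemma Dphi_eq (hnn : ∀ i s, 0 ≤ x i s) (phi : M) :
    Dphi tpy x phi = (∑ t, (slots tpy x t phi : ℝ)) - ∑ t, cts tpy x t phi := by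
  unfold Dphi
  rw [sum_sigma_phi]
  rw [Finset.sum_congr rfl fun t _ => sum_dcol_block (tpy := tpy) hnn t phi]
  rw [Finset.sum_sub_distrib]

lemma sum_dcol_total (hnn : ∀ i s, 0 ≤ x i s) (hrow : ∀ i, ∑ s, x i s = 1) :
    ∑ q : Idx tpy x, dcol tpy x q
      = (Fintype.card (Idx tpy x) : ℝ) - (Fintype.card N : ℝ) := by
  rw [← Finset.univ_sigma_univ, Finset.sum_sigma]
  rw [Finset.sum_congr rfl fun p _ => sum_dcol_block (tpy := tpy) hnn p.1 p.2]
  rw [Finset.sum_sub_distrib, sum_cts_all hrow]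
  congr 1
  rw [card_Idx]
  push_cast
  rfl

noncomputable def eIf (tpy : N → T) (x : N → M → ℝ) (phi : M) :
    Idx tpy x ≃ Fin (Fintype.card {q : Idx tpy x // q.1.2 = phi}
      + Fintype.card {q : Idx tpy x // ¬ q.1.2 = phi}) :=
  ((Equiv.sumCompl (fun q : Idx tpy x => q.1.2 = phi)).symm.trans
    (Equiv.sumCongr (Fintype.equivFin _) (Fintype.equivFin _))).trans finSumFinEquiv

lemma eIf_lt_of_phi (phi : M) (q : Idx tpy x) (h : q.1.2 = phi) :
    (eIf tpy x phi q).val < Fintype.card {q : Idx tpy x // q.1.2 = phi} := by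
  unfold eIf
  simp only [Equiv.trans_apply,
    Equiv.sumCompl_symm_apply_of_pos (p := fun q : Idx tpy x => q.1.2 = phi) h,
    Equiv.sumCongr_apply, Sum.map_inl, finSumFinEquiv_apply_left, Fin.coe_castAdd]
  exact (Fintype.equivFin _ _).isLt

lemma eIf_ge_of_nphi (phi : M) (q : Idx tpy x) (h : ¬ q.1.2 = phi) :
    Fintype.card {q : Idx tpy x // q.1.2 = phi} ≤ (eIf tpy x phi q).val := by
  unfold eIf
  simp only [Equiv.trans_apply,
    Equiv.sumCompl_symm_apply_of_neg (p := fun q : Idx tpy x => q.1.2 = phi) h,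
    Equiv.sumCongr_apply, Sum.map_inr, finSumFinEquiv_apply_right, Fin.coe_natAdd]
  omega

noncomputable def Bcol (tpy : N → T) (x : N → M → ℝ) (phi : M) (q : Idx tpy x) : ℝ :=
  cum (eIf tpy x phi) (dcol tpy x) ((eIf tpy x phi q).val)

noncomputable def Dslack (tpy : N → T) (x : N → M → ℝ) (phi : M) (j : ℕ) (q : Idx tpy x) : ℝ :=
  G j (Bcol tpy x phi q + dcol tpy x q) - G j (Bcol tpy x phi q)

lemma Bcol_nonneg (phi : M) (q : Idx tpy x) : 0 ≤ Bcol tpy x phi q :=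
  cum_nonneg _ (fun q' => dcol_nonneg q') _

lemma Bcol_add_le_total (phi : M) (q : Idx tpy x) :
    Bcol tpy x phi q + dcol tpy x q ≤ ∑ q', dcol tpy x q' := by
  rw [Bcol, ← cum_apply_succ (eIf tpy x phi) (dcol tpy x) q]
  exact cum_le_total _ (fun q' => dcol_nonneg q') _

lemma Dslack_nonneg (phi : M) (j : ℕ) (q : Idx tpy x) : 0 ≤ Dslack tpy x phi j q := by
  unfold Dslack
  have := G_mono (r := j) (a := Bcol tpy x phi q) (b := Bcol tpy x phi q + dcol tpy x q)
    (le_add_of_nonneg_right (dcol_nonneg q))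
  linarith

lemma Dslack_zero_of_dzero (phi : M) (j : ℕ) (q : Idx tpy x) (h : dcol tpy x q = 0) :
    Dslack tpy x phi j q = 0 := by
  unfold Dslack
  rw [h, add_zero]
  ring

lemma dcol_pos_of_Dslack_pos (phi : M) {j : ℕ} {q : Idx tpy x}
    (h : 0 < Dslack tpy x phi j q) : 0 < dcol tpy x q := by
  rcases lt_or_eq_of_le (dcol_nonneg (tpy := tpy) (x := x) q) with h' | h'
  · exact h'
  · exact absurd (Dslack_zero_of_dzero phi j q h'.symm) (ne_of_gt h)

noncomputable def Kn (tpy : N → T) (x : N → M → ℝ) : ℕ :=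
  Fintype.card (Idx tpy x) - Fintype.card N

lemma cardN_le_cardIdx (hnn : ∀ i s, 0 ≤ x i s) (hrow : ∀ i, ∑ s, x i s = 1) :
    Fintype.card N ≤ Fintype.card (Idx tpy x) := by
  have h1 : (Fintype.card N : ℝ) ≤ (Fintype.card (Idx tpy x) : ℝ) := by
    rw [← sum_cts_all (tpy := tpy) (x := x) hrow, card_Idx]
    push_cast
    exact Finset.sum_le_sum fun p _ => cts_le_slots (tpy := tpy) hnn p.1 p.2
  exact_mod_cast h1

lemma Kn_cast (hnn : ∀ i s, 0 ≤ x i s) (hrow : ∀ i, ∑ s, x i s = 1) :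
    ((Kn tpy x : ℕ) : ℝ) = (Fintype.card (Idx tpy x) : ℝ) - (Fintype.card N : ℝ) := by
  unfold Kn
  rw [Nat.cast_sub (cardN_le_cardIdx hnn hrow)]

lemma sum_dcol_eq_Kn (hnn : ∀ i s, 0 ≤ x i s) (hrow : ∀ i, ∑ s, x i s = 1) :
    ∑ q : Idx tpy x, dcol tpy x q = (Kn tpy x : ℝ) := by
  rw [sum_dcol_total hnn hrow, Kn_cast hnn hrow]

lemma Dslack_row (hnn : ∀ i s, 0 ≤ x i s) (hrow : ∀ i, ∑ s, x i s = 1) (phi : M)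
    {j : ℕ} (hj : j < Kn tpy x) : ∑ q : Idx tpy x, Dslack tpy x phi j q = 1 := by
  unfold Dslack Bcol
  rw [sum_cum_sub (eIf tpy x phi) (dcol tpy x) (G j), G_zero,
    sum_dcol_eq_Kn hnn hrow, G_eq_one]
  · ring
  · exact_mod_cast Nat.succ_le_of_lt hj

lemma Dslack_col (hnn : ∀ i s, 0 ≤ x i s) (hrow : ∀ i, ∑ s, x i s = 1) (phi : M)
    (q : Idx tpy x) : ∑ j : Fin (Kn tpy x), Dslack tpy x phi j.val q = dcol tpy x q := by
  unfold Dslack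
  have h := sum_G_sub_fin (Kn tpy x) (Bcol_nonneg phi q)
    (le_add_of_nonneg_right (dcol_nonneg (tpy := tpy) (x := x) q))
    (by rw [← sum_dcol_eq_Kn hnn hrow]; exact Bcol_add_le_total phi q)
  rw [h]
  ring

noncomputable def Sphi (tpy : N → T) (x : N → M → ℝ) (phi : M) : ℕ := ∑ t, slots tpy x t phi

noncomputable def Kphi (tpy : N → T) (x : N → M → ℝ) (phi : M) : ℕ :=
  Sphi tpy x phi - (⌈∑ t, cts tpy x t phi⌉).toNat

lemma Phi_nonneg (hnn : ∀ i s, 0 ≤ x i s) (phi : M) : 0 ≤ ∑ t, cts tpy x t phi :=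
  Finset.sum_nonneg fun t _ => cts_nonneg hnn t phi

lemma Phi_le_Sphi (hnn : ∀ i s, 0 ≤ x i s) (phi : M) :
    ∑ t, cts tpy x t phi ≤ (Sphi tpy x phi : ℝ) := by
  unfold Sphi
  push_cast
  exact Finset.sum_le_sum fun t _ => cts_le_slots (tpy := tpy) hnn t phi

lemma ceilPhi_toNat_le (hnn : ∀ i s, 0 ≤ x i s) (phi : M) :
    (⌈∑ t, cts tpy x t phi⌉).toNat ≤ Sphi tpy x phi := by
  have h1 : ⌈∑ t, cts tpy x t phi⌉ ≤ (Sphi tpy x phi : ℤ) := by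
    apply Int.ceil_le.mpr
    push_cast
    exact_mod_cast Phi_le_Sphi (tpy := tpy) hnn phi
  omega

lemma Kphi_cast (hnn : ∀ i s, 0 ≤ x i s) (phi : M) :
    ((Kphi tpy x phi : ℕ) : ℝ)
      = (Sphi tpy x phi : ℝ) - ((⌈∑ t, cts tpy x t phi⌉ : ℤ) : ℝ) := by
  unfold Kphi
  rw [Nat.cast_sub (ceilPhi_toNat_le hnn phi)]
  have h2 : (0:ℤ) ≤ ⌈∑ t, cts tpy x t phi⌉ := Int.ceil_nonneg (Phi_nonneg hnn phi)
  congr 1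
  exact_mod_cast Int.toNat_of_nonneg h2

lemma Kphi_le_Dphi (hnn : ∀ i s, 0 ≤ x i s) (phi : M) :
    ((Kphi tpy x phi : ℕ) : ℝ) ≤ Dphi tpy x phi := by
  rw [Kphi_cast hnn phi, Dphi_eq hnn phi]
  unfold Sphi
  push_cast
  have := Int.le_ceil (∑ t, cts tpy x t phi)
  have h2 : (∑ t, ((slots tpy x t phi : ℕ):ℝ)) = ((∑ t, slots tpy x t phi : ℕ) : ℝ) := by push_cast; rfl
  linarith [h2]

lemma Dphi_le_Kn (hnn : ∀ i s, 0 ≤ x i s) (hrow : ∀ i, ∑ s, x i s = 1) (phi : M) :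
    Dphi tpy x phi ≤ (Kn tpy x : ℝ) := by
  rw [← sum_dcol_eq_Kn hnn hrow]
  exact Finset.sum_le_sum_of_subset_of_nonneg (Finset.filter_subset _ _)
    (fun q _ _ => dcol_nonneg q)

lemma Kphi_le_Kn (hnn : ∀ i s, 0 ≤ x i s) (hrow : ∀ i, ∑ s, x i s = 1) (phi : M) :
    Kphi tpy x phi ≤ Kn tpy x := by
  have := le_trans (Kphi_le_Dphi (tpy := tpy) hnn phi) (Dphi_le_Kn hnn hrow phi)
  exact_mod_cast this

lemma Bcol_ge_Dphi (phi : M) (q : Idx tpy x) (h : ¬ q.1.2 = phi) :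
    Dphi tpy x phi ≤ Bcol tpy x phi q := by
  unfold Dphi Bcol cum
  apply Finset.sum_le_sum_of_subset_of_nonneg
  · intro q' hq'
    simp only [Finset.mem_filter, Finset.mem_univ, true_and] at hq' ⊢
    exact lt_of_lt_of_le (eIf_lt_of_phi phi q' hq') (eIf_ge_of_nphi phi q h)
  · intro q' _ _
    exact dcol_nonneg q'

lemma Dslack_dedicated (hnn : ∀ i s, 0 ≤ x i s) (phi : M) {j : ℕ}
    (hj : j < Kphi tpy x phi) (q : Idx tpy x) (h : ¬ q.1.2 = phi) :
    Dslack tpy x phi j q = 0 := by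
  have h1 : (j : ℝ) + 1 ≤ Bcol tpy x phi q := by
    have h2 := Bcol_ge_Dphi (tpy := tpy) (x := x) phi q h
    have h3 := Kphi_le_Dphi (tpy := tpy) (x := x) hnn phi
    have h4 : (j : ℝ) + 1 ≤ (Kphi tpy x phi : ℝ) := by exact_mod_cast Nat.succ_le_of_lt hj
    linarith
  unfold Dslack
  rw [G_eq_one h1, G_eq_one (by linarith [dcol_nonneg (tpy := tpy) (x := x) q])]
  ring

noncomputable def Drect (tpy : N → T) (x : N → M → ℝ) (phi : M) :
    (N ⊕ Fin (Kn tpy x)) → Idx tpy x → ℝ :=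
  Sum.elim (fun i q => Dreal tpy x i q) (fun j q => Dslack tpy x phi j.val q)

lemma Drect_nonneg (hnn : ∀ i s, 0 ≤ x i s) (phi : M) (u : N ⊕ Fin (Kn tpy x))
    (q : Idx tpy x) : 0 ≤ Drect tpy x phi u q := by
  rcases u with i | j
  · exact Dreal_nonneg hnn i q
  · exact Dslack_nonneg phi j.val q

lemma Drect_row (hnn : ∀ i s, 0 ≤ x i s) (hrow : ∀ i, ∑ s, x i s = 1) (phi : M)
    (u : N ⊕ Fin (Kn tpy x)) : ∑ q, Drect tpy x phi u q = 1 := by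
  rcases u with i | j
  · exact Dreal_row hnn hrow i
  · exact Dslack_row hnn hrow phi j.isLt

lemma Drect_col (hnn : ∀ i s, 0 ≤ x i s) (hrow : ∀ i, ∑ s, x i s = 1) (phi : M)
    (q : Idx tpy x) : ∑ u, Drect tpy x phi u q = 1 := by
  rw [Fintype.sum_sum_type]
  have h1 : ∑ i : N, Drect tpy x phi (Sum.inl i) q = G q.2.val (cts tpy x q.1.1 q.1.2) :=
    Dreal_col hnn q
  have h2 : ∑ j : Fin (Kn tpy x), Drect tpy x phi (Sum.inr j) q = dcol tpy x q :=
    Dslack_col hnn hrow phi q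
  rw [h1, h2]
  unfold dcol
  ring

lemma permMatrix_apply (σ : Equiv.Perm (Idx tpy x)) (p q : Idx tpy x) :
    (σ.permMatrix ℝ) p q = if σ p = q then (1:ℝ) else 0 := by
  simp [Equiv.Perm.permMatrix, PEquiv.toMatrix_apply, Equiv.toPEquiv_apply, eq_comm]

set_option maxHeartbeats 2000000 in
lemma main (phi : M) (tpy : N → T) (x : N → M → ℝ)
    (hnn : ∀ i s, 0 ≤ x i s) (hrow : ∀ i, ∑ s, x i s = 1) :
    ∃ (k : ℕ) (w : Fin k → ℝ) (a : Fin k → N → M),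
      (∀ m, 0 ≤ w m) ∧ (∑ m, w m = 1) ∧
      (∀ i s, x i s = ∑ m, w m * (if a m i = s then (1:ℝ) else 0)) ∧
      (∀ m (s : M) (R : Finset T),
        (∑ i ∈ univ.filter (fun i => tpy i ∈ R), x i s) - R.card
            ≤ ((univ.filter (fun i => tpy i ∈ R ∧ a m i = s)).card : ℝ) ∧
        ((univ.filter (fun i => tpy i ∈ R ∧ a m i = s)).card : ℝ)
            ≤ (∑ i ∈ univ.filter (fun i => tpy i ∈ R), x i s) + R.card) ∧
      (∀ m, (Fintype.card N : ℝ) - ((⌈∑ i, x i phi⌉ : ℤ) : ℝ)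
          ≤ ((univ.filter (fun i => a m i ≠ phi)).card : ℝ)) := by
  classical
  have hcard : Fintype.card (N ⊕ Fin (Kn tpy x)) = Fintype.card (Idx tpy x) := by
    rw [Fintype.card_sum, Fintype.card_fin]
    have := cardN_le_cardIdx (tpy := tpy) (x := x) hnn hrow
    unfold Kn
    omega
  obtain ⟨e⟩ : Nonempty ((N ⊕ Fin (Kn tpy x)) ≃ Idx tpy x) := ⟨Fintype.equivOfCardEq hcard⟩
  set Dm : Matrix (Idx tpy x) (Idx tpy x) ℝ :=
    fun p q => Drect tpy x phi (e.symm p) q with hDmdef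
  have hDS : Dm ∈ doublyStochastic ℝ (Idx tpy x) := by
    rw [mem_doublyStochastic_iff_sum]
    refine ⟨fun p q => Drect_nonneg hnn phi _ _, fun p => Drect_row hnn hrow phi _, fun q => ?_⟩
    rw [hDmdef]
    rw [Equiv.sum_comp e.symm (fun u => Drect tpy x phi u q)]
    exact Drect_col hnn hrow phi q
  obtain ⟨w, hw0, hw1, hwD⟩ := exists_eq_sum_perm_of_mem_doublyStochastic hDS
  have hDmE : ∀ p q, Dm p q = ∑ σ : Equiv.Perm (Idx tpy x), w σ * (if σ p = q then (1:ℝ) else 0) := by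
    intro p q
    rw [← hwD]
    rw [Matrix.sum_apply, Finset.sum_congr rfl (fun σ _ => ?_)]
    rw [Matrix.smul_apply, permMatrix_apply, smul_eq_mul]
  set S : Finset (Equiv.Perm (Idx tpy x)) :=
    univ.filter (fun σ : Equiv.Perm (Idx tpy x) => 0 < w σ) with hSdef
  have hwzero : ∀ σ ∉ S, w σ = 0 := by
    intro σ hσ
    rw [hSdef] at hσ
    simp only [Finset.mem_filter, Finset.mem_univ, true_and, not_lt] at hσ
    exact le_antisymm hσ (hw0 σ)
  have hFinS : ∀ g : Equiv.Perm (Idx tpy x) → ℝ,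
      ∑ m : Fin S.card, g (S.equivFin.symm m).val = ∑ σ ∈ S, g σ := by
    intro g
    rw [Equiv.sum_comp S.equivFin.symm (fun σ : {y // y ∈ S} => g σ.val)]
    exact Finset.sum_coe_sort S g
  -- the per-permutation facts
  have key : ∀ m : Fin S.card,
      (∀ (s : M) (R : Finset T),
        (∑ i ∈ univ.filter (fun i => tpy i ∈ R), x i s) - R.card
            ≤ ((univ.filter (fun i => tpy i ∈ R ∧
                ((S.equivFin.symm m).val (e (Sum.inl i))).1.2 = s)).card : ℝ) ∧
        ((univ.filter (fun i => tpy i ∈ R ∧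
                ((S.equivFin.symm m).val (e (Sum.inl i))).1.2 = s)).card : ℝ)
            ≤ (∑ i ∈ univ.filter (fun i => tpy i ∈ R), x i s) + R.card) ∧
      ((Fintype.card N : ℝ) - ((⌈∑ i, x i phi⌉ : ℤ) : ℝ)
          ≤ ((univ.filter (fun i =>
              ((S.equivFin.symm m).val (e (Sum.inl i))).1.2 ≠ phi)).card : ℝ)) := by
    intro m
    set σ : Equiv.Perm (Idx tpy x) := (S.equivFin.symm m).val with hσdef
    have hσS : σ ∈ S := (S.equivFin.symm m).prop
    have hσpos : 0 < w σ := by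
      rw [hSdef] at hσS
      exact (Finset.mem_filter.mp hσS).2
    have hsupp : ∀ u, 0 < Drect tpy x phi u (σ (e u)) := by
      intro u
      have h1 : Dm (e u) (σ (e u)) = ∑ τ : Equiv.Perm (Idx tpy x),
          w τ * (if τ (e u) = σ (e u) then (1:ℝ) else 0) := hDmE _ _
      have h2 : w σ * (if σ (e u) = σ (e u) then (1:ℝ) else 0)
          ≤ ∑ τ : Equiv.Perm (Idx tpy x), w τ * (if τ (e u) = σ (e u) then (1:ℝ) else 0) :=
        Finset.single_le_sum (f := fun τ => w τ * (if τ (e u) = σ (e u) then (1:ℝ) else 0))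
          (fun τ _ => mul_nonneg (hw0 τ) (by split <;> norm_num)) (Finset.mem_univ σ)
      have h3 : Dm (e u) (σ (e u)) = Drect tpy x phi u (σ (e u)) := by
        rw [hDmdef]
        simp only [Equiv.symm_apply_apply]
      rw [if_pos rfl, mul_one] at h2
      rw [h3] at h1
      linarith
    have htype : ∀ i : N, (σ (e (Sum.inl i))).1.1 = tpy i := by
      intro i
      by_contra hne
      have h := hsupp (Sum.inl i)
      have h0 : Drect tpy x phi (Sum.inl i) (σ (e (Sum.inl i))) = 0 :=
        Dreal_zero_of_ne i _ hne
      rw [h0] at h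
      exact lt_irrefl _ h
    have hdpos : ∀ j : Fin (Kn tpy x), 0 < dcol tpy x (σ (e (Sum.inr j))) := by
      intro j
      apply dcol_pos_of_Dslack_pos (j := j.val) phi
      have h := hsupp (Sum.inr j)
      exact h
    have hded : ∀ j : Fin (Kn tpy x), j.val < Kphi tpy x phi →
        (σ (e (Sum.inr j))).1.2 = phi := by
      intro j hj
      by_contra hne
      have h := hsupp (Sum.inr j)
      have h0 : Drect tpy x phi (Sum.inr j) (σ (e (Sum.inr j))) = 0 :=
        Dslack_dedicated hnn phi hj _ hne
      rw [h0] at h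
      exact lt_irrefl _ h
    have hkey : ∀ Blk : Finset (Idx tpy x),
        (univ.filter (fun i : N => σ (e (Sum.inl i)) ∈ Blk)).card
          + (univ.filter (fun j : Fin (Kn tpy x) => σ (e (Sum.inr j)) ∈ Blk)).card
          = Blk.card := by
      intro Blk
      have h1 := card_filter_sumtype (fun u : N ⊕ Fin (Kn tpy x) => σ (e u) ∈ Blk)
      have h2 := card_filter_equiv_mem (e.trans σ) Blk
      simp only [Equiv.trans_apply] at h2
      convert h1.symm.trans h2 using 2
    have hBlkcard : ∀ (R : Finset T) (s : M),
        (univ.filter (fun q : Idx tpy x => q.1.1 ∈ R ∧ q.1.2 = s)).card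
          = ∑ t ∈ R, slots tpy x t s := by
      intro R s
      rw [Finset.card_eq_sum_ones, sum_sigma_blk (tpy := tpy) (x := x) (fun _ => (1:ℕ)) R s]
      simp
    constructor
    · intro s R
      have hiff : univ.filter (fun i : N => tpy i ∈ R ∧ (σ (e (Sum.inl i))).1.2 = s)
          = univ.filter (fun i : N =>
              σ (e (Sum.inl i)) ∈ univ.filter (fun q : Idx tpy x => q.1.1 ∈ R ∧ q.1.2 = s)) := by
        apply Finset.filter_congr
        intro i _
        simp only [Finset.mem_filter, Finset.mem_univ, true_and, htype i]
      have hcnt := hkey (univ.filter (fun q : Idx tpy x => q.1.1 ∈ R ∧ q.1.2 = s))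
      rw [← hiff, hBlkcard R s] at hcnt
      have hcross_le : (univ.filter (fun j : Fin (Kn tpy x) =>
          σ (e (Sum.inr j)) ∈ univ.filter (fun q : Idx tpy x => q.1.1 ∈ R ∧ q.1.2 = s))).card
          ≤ R.card := by
        apply Finset.card_le_card_of_injOn (fun j => (σ (e (Sum.inr j))).1.1)
        · intro j hj
          simp only [Finset.mem_coe, Finset.mem_filter, Finset.mem_univ, true_and] at hj
          exact hj.1
        · intro j hj j' hj' heq
          simp only [Finset.coe_filter, Finset.mem_univ, true_and, Set.mem_setOf_eq,
            Finset.mem_filter] at hj hj'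
          have hfst : (σ (e (Sum.inr j))).1 = (σ (e (Sum.inr j'))).1 :=
            Prod.ext heq (hj.2.trans hj'.2.symm)
          have hq : σ (e (Sum.inr j)) = σ (e (Sum.inr j')) :=
            dcol_pos_unique hnn (hdpos j) (hdpos j') hfst
          exact Sum.inr_injective (e.injective (σ.injective hq))
      have hslots_lo : ∑ t ∈ R, cts tpy x t s ≤ ((∑ t ∈ R, slots tpy x t s : ℕ) : ℝ) := by
        push_cast
        exact Finset.sum_le_sum fun t _ => cts_le_slots (tpy := tpy) hnn t s
      have hslots_hi : ((∑ t ∈ R, slots tpy x t s : ℕ) : ℝ)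
          ≤ (∑ t ∈ R, cts tpy x t s) + R.card := by
        push_cast
        have h5 := Finset.sum_le_sum
          (fun t (_ : t ∈ R) => le_of_lt (slots_lt_cts_add_one (tpy := tpy) hnn t s))
        rw [Finset.sum_add_distrib, Finset.sum_const, nsmul_eq_mul, mul_one] at h5
        exact h5
      have hcnt' : ((univ.filter (fun i : N => tpy i ∈ R ∧ (σ (e (Sum.inl i))).1.2 = s)).card : ℝ)
          + (univ.filter (fun j : Fin (Kn tpy x) =>
              σ (e (Sum.inr j)) ∈ univ.filter (fun q : Idx tpy x => q.1.1 ∈ R ∧ q.1.2 = s))).card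
          = ((∑ t ∈ R, slots tpy x t s : ℕ) : ℝ) := by
        exact_mod_cast hcnt
      have hcR : ((univ.filter (fun j : Fin (Kn tpy x) =>
          σ (e (Sum.inr j)) ∈ univ.filter (fun q : Idx tpy x => q.1.1 ∈ R ∧ q.1.2 = s))).card : ℝ)
          ≤ R.card := by exact_mod_cast hcross_le
      have hc0 : (0:ℝ) ≤ ((univ.filter (fun j : Fin (Kn tpy x) =>
          σ (e (Sum.inr j)) ∈ univ.filter (fun q : Idx tpy x => q.1.1 ∈ R ∧ q.1.2 = s))).card : ℝ) := by
        positivity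
      rw [← sum_cts_filter R s]
      constructor <;> linarith
    · -- objective bound
      have hPcard : (univ.filter (fun q : Idx tpy x => q.1.2 = phi)).card = Sphi tpy x phi := by
        rw [Finset.card_eq_sum_ones, sum_sigma_phi (tpy := tpy) (x := x) (fun _ => (1:ℕ)) phi]
        unfold Sphi
        simp
      have hiffp : univ.filter (fun i : N => (σ (e (Sum.inl i))).1.2 = phi)
          = univ.filter (fun i : N =>
              σ (e (Sum.inl i)) ∈ univ.filter (fun q : Idx tpy x => q.1.2 = phi)) := by
        apply Finset.filter_congr
        intro i _
        simp
      have hcntp := hkey (univ.filter (fun q : Idx tpy x => q.1.2 = phi))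
      rw [← hiffp, hPcard] at hcntp
      have hKK : Kphi tpy x phi ≤ Kn tpy x := Kphi_le_Kn hnn hrow phi
      have hcp_ge : Kphi tpy x phi ≤ (univ.filter (fun j : Fin (Kn tpy x) =>
          σ (e (Sum.inr j)) ∈ univ.filter (fun q : Idx tpy x => q.1.2 = phi))).card := by
        have h6 : (univ : Finset (Fin (Kphi tpy x phi))).card ≤ (univ.filter (fun j : Fin (Kn tpy x) =>
            σ (e (Sum.inr j)) ∈ univ.filter (fun q : Idx tpy x => q.1.2 = phi))).card := by
          apply Finset.card_le_card_of_injOn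
            (fun j => (⟨j.val, lt_of_lt_of_le j.isLt hKK⟩ : Fin (Kn tpy x)))
          · intro j _
            simp only [Finset.mem_coe, Finset.mem_filter, Finset.mem_univ, true_and]
            exact hded _ j.isLt
          · intro j _ j' _ hh
            have hv : j.val = j'.val := by
              have := congrArg Fin.val hh
              simpa using this
            exact Fin.ext hv
        simpa using h6
      have hsplit := Finset.card_filter_add_card_filter_not
        (s := (univ : Finset N)) (p := fun i : N => (σ (e (Sum.inl i))).1.2 = phi)
      rw [Finset.card_univ] at hsplit
      have hPhi : ∑ t, cts tpy x t phi = ∑ i, x i phi := by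
        have h7 := sum_cts_filter (tpy := tpy) (x := x) (univ : Finset T) phi
        simpa using h7
      have hKcast := Kphi_cast (tpy := tpy) hnn phi
      rw [hPhi] at hKcast
      have hcntp' : ((univ.filter (fun i : N => (σ (e (Sum.inl i))).1.2 = phi)).card : ℝ)
          + ((univ.filter (fun j : Fin (Kn tpy x) =>
              σ (e (Sum.inr j)) ∈ univ.filter (fun q : Idx tpy x => q.1.2 = phi))).card : ℝ)
          = (Sphi tpy x phi : ℝ) := by exact_mod_cast hcntp
      have hcp_ge' : ((Kphi tpy x phi : ℕ) : ℝ) ≤ ((univ.filter (fun j : Fin (Kn tpy x) =>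
          σ (e (Sum.inr j)) ∈ univ.filter (fun q : Idx tpy x => q.1.2 = phi))).card : ℝ) := by
        exact_mod_cast hcp_ge
      have hsplit' : ((univ.filter (fun i : N => (σ (e (Sum.inl i))).1.2 = phi)).card : ℝ)
          + ((univ.filter (fun i : N => ¬ (σ (e (Sum.inl i))).1.2 = phi)).card : ℝ)
          = (Fintype.card N : ℝ) := by exact_mod_cast hsplit
      simp only [ne_eq]
      linarith
  refine ⟨S.card, fun m => w (S.equivFin.symm m).val,
    fun m i => ((S.equivFin.symm m).val (e (Sum.inl i))).1.2, fun m => hw0 _, ?_, ?_, 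
    fun m => (key m).1, fun m => (key m).2⟩
  · rw [hFinS w]
    rw [Finset.sum_subset (Finset.subset_univ S) (fun σ _ hσ => hwzero σ hσ)]
    exact hw1
  · intro i s
    have hxis : x i s = ∑ q ∈ univ.filter (fun q : Idx tpy x => q.1.2 = s), Dreal tpy x i q := by
      rw [sum_sigma_phi (fun q => Dreal tpy x i q) s]
      rw [Finset.sum_congr rfl fun t _ => sum_Dreal_block hnn (t, s) i]
      unfold massf
      rw [Finset.sum_ite_eq univ (tpy i) (fun _ => x i s)]
      simp
    calc x i s
        = ∑ q ∈ univ.filter (fun q : Idx tpy x => q.1.2 = s), Dm (e (Sum.inl i)) q := by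
          rw [hxis]
          apply Finset.sum_congr rfl
          intro q _
          rw [hDmdef]
          simp only [Equiv.symm_apply_apply]
          rfl
      _ = ∑ σ : Equiv.Perm (Idx tpy x),
            w σ * (if (σ (e (Sum.inl i))).1.2 = s then (1:ℝ) else 0) := by
          rw [Finset.sum_congr rfl (fun q _ => hDmE (e (Sum.inl i)) q), Finset.sum_comm]
          apply Finset.sum_congr rfl
          intro σ _
          rw [← Finset.mul_sum]
          congr 1
          rw [Finset.sum_ite_eq (univ.filter (fun q : Idx tpy x => q.1.2 = s))
            (σ (e (Sum.inl i))) (fun _ => (1:ℝ))]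
          simp
      _ = ∑ σ ∈ S, w σ * (if (σ (e (Sum.inl i))).1.2 = s then (1:ℝ) else 0) := by
          rw [Finset.sum_subset (Finset.subset_univ S)]
          intro σ _ hσ
          rw [hwzero σ hσ, zero_mul]
      _ = ∑ m : Fin S.card, w (S.equivFin.symm m).val *
            (if ((S.equivFin.symm m).val (e (Sum.inl i))).1.2 = s then (1:ℝ) else 0) := by
          rw [hFinS (fun σ => w σ * (if (σ (e (Sum.inl i))).1.2 = s then (1:ℝ) else 0))]

end Main
end Stmt3Aux

open Finset in
/-- **Lemma (implementation).**  Every optimal solution `x` of the fractional assignment LP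
(maximize the number of students at regular schools subject to the distributional
constraints) is a convex combination of approximately feasible integral assignments:
integral assignments that violate each lower- and upper-bound quota by at most `|T|` and
assign at least `⌊OPT⌋` students to regular schools. -/
theorem stmt3 {N M T : Type} [Fintype N] [Fintype M] [Fintype T]
    [DecidableEq M] [DecidableEq T]
    (phi : M) (tpy : N → T)
    (Z : M → Finset (Finset T)) (qlo qhi : M → Finset T → ℝ)
    (hZphi : Z phi = ∅)
    (x : N → M → ℝ)
    (hnn : ∀ i s, 0 ≤ x i s) (hrow : ∀ i, ∑ s, x i s = 1)
    (hq : ∀ s, ∀ R ∈ Z s,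
      qlo s R ≤ ∑ i ∈ univ.filter (fun i => tpy i ∈ R), x i s ∧
      ∑ i ∈ univ.filter (fun i => tpy i ∈ R), x i s ≤ qhi s R)
    -- `x` is optimal: no feasible assignment sends more students to regular schools
    (hopt : ∀ z : N → M → ℝ, (∀ i s, 0 ≤ z i s) → (∀ i, ∑ s, z i s = 1) →
      (∀ s, ∀ R ∈ Z s,
        qlo s R ≤ ∑ i ∈ univ.filter (fun i => tpy i ∈ R), z i s ∧
        ∑ i ∈ univ.filter (fun i => tpy i ∈ R), z i s ≤ qhi s R) →
      ∑ i, ∑ s ∈ univ.erase phi, z i s ≤ ∑ i, ∑ s ∈ univ.erase phi, x i s) :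
    ∃ (k : ℕ) (w : Fin k → ℝ) (a : Fin k → N → M),
      (∀ m, 0 ≤ w m) ∧ (∑ m, w m = 1) ∧
      -- the convex combination of the integral assignments is `x`
      (∀ i s, x i s = ∑ m, w m * (if a m i = s then (1:ℝ) else 0)) ∧
      -- each integral assignment is approximately feasible
      (∀ m, ∀ s, ∀ R ∈ Z s,
        qlo s R - Fintype.card T ≤
          ((univ.filter (fun i => tpy i ∈ R ∧ a m i = s)).card : ℝ) ∧
        ((univ.filter (fun i => tpy i ∈ R ∧ a m i = s)).card : ℝ) ≤
          qhi s R + Fintype.card T) ∧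
      (∀ m, (⌊∑ i, ∑ s ∈ univ.erase phi, x i s⌋ : ℝ) ≤
        (univ.filter (fun i => a m i ≠ phi)).card) := by
  classical
  obtain ⟨k, w, a, hw0, hw1, hrec, hcount, hobj⟩ := Stmt3Aux.main phi tpy x hnn hrow
  refine ⟨k, w, a, hw0, hw1, hrec, ?_, ?_⟩
  · intro m s R hR
    obtain ⟨hlo, hhi⟩ := hq s R hR
    obtain ⟨h1, h2⟩ := hcount m s R
    have hRcard : (R.card : ℝ) ≤ (Fintype.card T : ℝ) := by
      have h3 : R.card ≤ Fintype.card T := by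
        simpa using Finset.card_le_card (Finset.subset_univ R)
      exact_mod_cast h3
    constructor <;> linarith
  · intro m
    have hO : ∑ i, ∑ s ∈ univ.erase phi, x i s = (Fintype.card N : ℝ) - ∑ i, x i phi := by
      have h4 : ∀ i, ∑ s ∈ univ.erase phi, x i s = 1 - x i phi := by
        intro i
        rw [Finset.sum_erase_eq_sub (Finset.mem_univ phi), hrow i]
      rw [Finset.sum_congr rfl fun i _ => h4 i, Finset.sum_sub_distrib]
      simp [Finset.card_univ]
    have hfl : ((⌊∑ i, ∑ s ∈ univ.erase phi, x i s⌋ : ℤ) : ℝ)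
        = (Fintype.card N : ℝ) - ((⌈∑ i, x i phi⌉ : ℤ) : ℝ) := by
      rw [hO]
      have h9 : (Fintype.card N : ℝ) - ∑ i, x i phi
          = -(∑ i, x i phi) + ((Fintype.card N : ℤ) : ℝ) := by push_cast; ring
      rw [h9, Int.floor_add_intCast, Int.floor_neg]
      push_cast
      ring
    rw [hfl]
    exact hobj m
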